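/- For all natural numbers n_M and Δ, the maximum over integers x with 0 ≤ x ≤ n_M of the quantity 2·n_M + Δ − x − ρ(x) equals n_M + φ(n_M, Δ). -/

import Mathlib

/-- Down-shift operator `S^Δ` on matrices over `F₂`: shifts rows down by `Δ`,
filling the top `Δ` rows with zeros. -/
def shiftS (Δ : ℕ) {r c : ℕ} (X : Matrix (Fin r) (Fin c) (ZMod 2)) :
    Matrix (Fin r) (Fin c) (ZMod 2) :=
  fun i j => if _h : Δ ≤ (i : ℕ) then
      X ⟨(i : ℕ) - Δ, lt_of_le_of_lt (Nat.sub_le _ _) i.isLt⟩ j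
    else 0

/-- The function `φ(p,q)`: with `l = p div q` (convention `p div 0 = 0`),
`φ(p,q) = q + l·q/2` for `l` even, `φ(p,q) = p − (l−1)·q/2` for `l` odd. -/
def phi (p q : ℕ) : ℕ :=
  if Even (p / q) then q + (p / q / 2) * q else p - ((p / q - 1) / 2) * q

/-- Probability that the random variable `f` takes the value `a`, for the
discrete probability mass function `p`. -/
noncomputable def prEq {Ω α : Type*} [Fintype Ω] [DecidableEq α]
    (p : Ω → ℝ) (f : Ω → α) (a : α) : ℝ :=
  ∑ ω ∈ Finset.univ.filter (fun ω => f ω = a), p ω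

/-- Shannon entropy (base 2) of the random variable `f` under the pmf `p`. -/
noncomputable def entropy2 {Ω α : Type*} [Fintype Ω] [Fintype α] [DecidableEq α]
    (p : Ω → ℝ) (f : Ω → α) : ℝ :=
  -∑ a : α, prEq p f a * Real.logb 2 (prEq p f a)

/-- Independence of two random variables under the pmf `p`. -/
def IndepRV {Ω α β : Type*} [Fintype Ω] [DecidableEq α] [DecidableEq β]
    (p : Ω → ℝ) (f : Ω → α) (g : Ω → β) : Prop :=
  ∀ a b, prEq p (fun ω => (f ω, g ω)) (a, b) = prEq p f a * prEq p g b

/-- Mutual independence of three random variables under the pmf `p`. -/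
def MutIndep3 {Ω α β γ : Type*} [Fintype Ω] [DecidableEq α] [DecidableEq β]
    [DecidableEq γ] (p : Ω → ℝ) (f : Ω → α) (g : Ω → β) (h : Ω → γ) : Prop :=
  ∀ a b c, prEq p (fun ω => (f ω, g ω, h ω)) (a, b, c)
      = prEq p f a * prEq p g b * prEq p h c

/-- Mutual information (base 2) `I(f; g) = H(f) + H(g) − H(f, g)`. -/
noncomputable def mutInfo2 {Ω α β : Type*} [Fintype Ω] [Fintype α] [Fintype β]
    [DecidableEq α] [DecidableEq β] (p : Ω → ℝ) (f : Ω → α) (g : Ω → β) : ℝ :=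
  entropy2 p f + entropy2 p g - entropy2 p (fun ω => (f ω, g ω))

/-- Number of ones in a vector over `F₂`. -/
def wt {n : ℕ} (a : Fin n → ZMod 2) : ℕ :=
  (Finset.univ.filter (fun i => a i = 1)).card

/-- `γ1(a)`: complement of `a` stacked over the all-ones vector of length `Δ`. -/
def gamma1 (Δ : ℕ) {nM : ℕ} (a : Fin nM → ZMod 2) : Fin (nM + Δ) → ZMod 2 :=
  fun i => if h : (i : ℕ) < nM then 1 - a ⟨(i : ℕ), h⟩ else 1

/-- `γ2(a)`: the zero vector of length `Δ` stacked over the complement of `a`. -/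
def gamma2 (Δ : ℕ) {nM : ℕ} (a : Fin nM → ZMod 2) : Fin (nM + Δ) → ZMod 2 :=
  fun i => if _h : Δ ≤ (i : ℕ) then
      1 - a ⟨(i : ℕ) - Δ, by have := i.isLt; omega⟩
    else 0

/-- The overlap `γ1(a)^T γ2(a)`: number of positions where both are one. -/
def overlap (Δ : ℕ) {nM : ℕ} (a : Fin nM → ZMod 2) : ℕ :=
  (Finset.univ.filter (fun i => gamma1 Δ a i = 1 ∧ gamma2 Δ a i = 1)).card

/-- `ρ(x)`: minimal overlap over all vectors `a ∈ F₂^{n_M}` with `|a| = x`. -/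
noncomputable def rho (Δ nM x : ℕ) : ℕ :=
  sInf (overlap Δ '' {a : Fin nM → ZMod 2 | wt a = x})

open Finset

def cnt (n : ℕ) (b : ℕ → Bool) : ℕ := ∑ j ∈ Finset.range n, (b j).toNat

def costF (Δ n : ℕ) (b : ℕ → Bool) : ℕ :=
  (∑ j ∈ Finset.range (n - Δ), (b j && b (j + Δ)).toNat)
  + ∑ j ∈ Finset.Ico (n - Δ) n, (b j).toNat

def Cfun (Δ n : ℕ) : ℕ :=
  if _h : Δ = 0 then 0 else
  if _h1 : n < Δ then 0 else
  if _h2 : n < 2 * Δ then n - Δ else Δ + Cfun Δ (n - 2 * Δ)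
termination_by n
decreasing_by omega

lemma sum_range_split (f : ℕ → ℕ) (m k : ℕ) :
    ∑ j ∈ range (m + k), f j = (∑ j ∈ range m, f j) + ∑ j ∈ range k, f (m + j) := by
  induction k with
  | zero => simp
  | succ k ih => rw [Nat.add_succ, Finset.sum_range_succ, ih, Finset.sum_range_succ]; ring

lemma sum_range_split' (f : ℕ → ℕ) {m n : ℕ} (h : m ≤ n) :
    ∑ j ∈ range n, f j = (∑ j ∈ range m, f j) + ∑ j ∈ range (n - m), f (m + j) := by
  have := sum_range_split f m (n - m)
  rwa [show m + (n - m) = n from by omega] at this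

lemma pt_bound (b : ℕ → Bool) (j Δ : ℕ) :
    (b j).toNat + (b (j + Δ)).toNat ≤ (b j && b (j + Δ)).toNat + 1 := by
  cases h1 : b j <;> cases h2 : b (j + Δ) <;> simp [h1, h2]

lemma front_bound (Δ : ℕ) (b : ℕ → Bool) :
    ∑ j ∈ range (2 * Δ), (b j).toNat
      ≤ (∑ j ∈ range (2 * Δ), (b j && b (j + Δ)).toNat) + Δ := by
  rw [sum_range_split' (fun j => (b j).toNat) (show Δ ≤ 2 * Δ by omega)]
  have hsum : (∑ j ∈ range Δ, (b j).toNat) + ∑ j ∈ range (2 * Δ - Δ), (b (Δ + j)).toNat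
      ≤ (∑ j ∈ range Δ, (b j && b (j + Δ)).toNat) + Δ := by
    rw [show 2 * Δ - Δ = Δ from by omega, ← Finset.sum_add_distrib]
    calc ∑ j ∈ range Δ, ((b j).toNat + (b (Δ + j)).toNat)
        ≤ ∑ j ∈ range Δ, ((b j && b (j + Δ)).toNat + 1) :=
          Finset.sum_le_sum fun j _ => by rw [Nat.add_comm Δ j]; exact pt_bound b j Δ
      _ = _ := by rw [Finset.sum_add_distrib, Finset.sum_const, card_range, smul_eq_mul, mul_one]
  refine hsum.trans (Nat.add_le_add_right ?_ Δ)
  exact Finset.sum_le_sum_of_subset (Finset.range_subset_range.2 (by omega))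

lemma lower_bound (Δ : ℕ) : ∀ n b, cnt n b ≤ costF Δ n b + Cfun Δ n := by
  intro n
  induction n using Nat.strong_induction_on with
  | _ n ih =>
  intro b
  rcases Nat.eq_zero_or_pos Δ with hΔ | hΔ
  · subst hΔ
    rw [Cfun]
    simp only [↓reduceDIte, Nat.add_zero, Nat.sub_zero, costF, cnt, Bool.and_self,
      Finset.Ico_self, Finset.sum_empty, Nat.add_zero, ← Finset.range_eq_Ico, le_refl]
  have hne : Δ ≠ 0 := hΔ.ne'
  rw [Cfun, dif_neg hne]
  rcases lt_or_ge n Δ with h1 | h1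
  · rw [dif_pos h1, costF, show n - Δ = 0 from by omega]
    simp only [Finset.range_zero, Finset.sum_empty, Nat.zero_add, ← Finset.range_eq_Ico]
    rw [cnt]
    omega
  rw [dif_neg (not_lt.2 h1)]
  have hcnt : cnt n b = (∑ j ∈ range (n - Δ), (b j).toNat)
      + ∑ j ∈ Finset.Ico (n - Δ) n, (b j).toNat := by
    rw [cnt, sum_range_split' (fun j => (b j).toNat) (show n - Δ ≤ n from by omega),
      Finset.sum_Ico_eq_sum_range]
  rcases lt_or_ge n (2 * Δ) with h2 | h2
  · rw [dif_pos h2, costF, hcnt]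
    have key : ∑ j ∈ range (n - Δ), (b j).toNat
        ≤ (∑ j ∈ range (n - Δ), (b j && b (j + Δ)).toNat) + (n - Δ) := by
      calc ∑ j ∈ range (n - Δ), (b j).toNat
          ≤ ∑ j ∈ range (n - Δ), ((b j && b (j + Δ)).toNat + 1) :=
            Finset.sum_le_sum fun j _ => by cases b j <;> simp
        _ = _ := by rw [Finset.sum_add_distrib, Finset.sum_const, card_range, smul_eq_mul, mul_one]
    omega
  rw [dif_neg (not_lt.2 h2)]
  rcases lt_or_ge n (3 * Δ) with h3 | h3
  · -- 2Δ ≤ n < 3Δ : direct argument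
    rw [costF, hcnt]
    have hS1 : ∑ j ∈ range (n - Δ), (b j).toNat
        = (∑ j ∈ range Δ, (b j).toNat) + ∑ j ∈ range (n - Δ - Δ), (b (Δ + j)).toNat :=
      sum_range_split' _ (by omega)
    have hsub : ∑ j ∈ range (n - Δ - Δ), (b (Δ + j)).toNat
        ≤ ∑ j ∈ range Δ, (b (Δ + j)).toNat :=
      Finset.sum_le_sum_of_subset (Finset.range_subset_range.2 (by omega))
    have hpt : (∑ j ∈ range Δ, (b j).toNat) + ∑ j ∈ range Δ, (b (Δ + j)).toNat
        ≤ (∑ j ∈ range Δ, (b j && b (j + Δ)).toNat) + Δ := by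
      rw [← Finset.sum_add_distrib]
      calc ∑ j ∈ range Δ, ((b j).toNat + (b (Δ + j)).toNat)
          ≤ ∑ j ∈ range Δ, ((b j && b (j + Δ)).toNat + 1) :=
            Finset.sum_le_sum fun j _ => by rw [Nat.add_comm Δ j]; exact pt_bound b j Δ
        _ = _ := by rw [Finset.sum_add_distrib, Finset.sum_const, card_range, smul_eq_mul, mul_one]
    have hAsub : ∑ j ∈ range Δ, (b j && b (j + Δ)).toNat
        ≤ ∑ j ∈ range (n - Δ), (b j && b (j + Δ)).toNat :=
      Finset.sum_le_sum_of_subset (Finset.range_subset_range.2 (by omega))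
    omega
  · -- n ≥ 3Δ : induction step
    set b' : ℕ → Bool := fun j => b (j + 2 * Δ) with hb'
    have ihb := ih (n - 2 * Δ) (by omega) b'
    have hcnt2 : cnt n b = (∑ j ∈ range (2 * Δ), (b j).toNat) + cnt (n - 2 * Δ) b' := by
      rw [cnt, sum_range_split' (fun j => (b j).toNat) (show 2 * Δ ≤ n from by omega), cnt]
      congr 1
      exact Finset.sum_congr rfl fun j _ => by rw [hb']; simp [Nat.add_comm]
    have hcost2 : costF Δ n b
        = (∑ j ∈ range (2 * Δ), (b j && b (j + Δ)).toNat) + costF Δ (n - 2 * Δ) b' := by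
      rw [costF, costF]
      have hA : ∑ j ∈ range (n - Δ), (b j && b (j + Δ)).toNat
          = (∑ j ∈ range (2 * Δ), (b j && b (j + Δ)).toNat)
            + ∑ j ∈ range (n - 2 * Δ - Δ), (b' j && b' (j + Δ)).toNat := by
        rw [sum_range_split' (fun j => (b j && b (j + Δ)).toNat)
          (show 2 * Δ ≤ n - Δ from by omega)]
        congr 1
        rw [show n - Δ - 2 * Δ = n - 2 * Δ - Δ from by omega]
        refine Finset.sum_congr rfl fun j _ => ?_
        simp only [hb']
        rw [show 2 * Δ + j = j + 2 * Δ from by omega,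
          show j + 2 * Δ + Δ = j + Δ + 2 * Δ from by omega]
      have hL : ∑ j ∈ Finset.Ico (n - Δ) n, (b j).toNat
          = ∑ j ∈ Finset.Ico (n - 2 * Δ - Δ) (n - 2 * Δ), (b' j).toNat := by
        rw [Finset.sum_Ico_eq_sum_range, Finset.sum_Ico_eq_sum_range]
        rw [show n - (n - Δ) = Δ from by omega,
          show n - 2 * Δ - (n - 2 * Δ - Δ) = Δ from by omega]
        refine Finset.sum_congr rfl fun j _ => ?_
        simp only [hb']
        rw [show n - 2 * Δ - Δ + j + 2 * Δ = n - Δ + j from by omega]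
      rw [hA, hL]
      ring
    rw [hcnt2, hcost2]
    have hfb := front_bound Δ b
    omega

lemma phi_eq (Δ : ℕ) : ∀ n, phi n Δ = Δ + Cfun Δ n := by
  intro n
  induction n using Nat.strong_induction_on with
  | _ n ih =>
  rcases Nat.eq_zero_or_pos Δ with hΔ | hΔ
  · subst hΔ; rw [Cfun]; simp [phi]
  have hne : Δ ≠ 0 := hΔ.ne'
  rw [Cfun, dif_neg hne]
  rcases lt_or_ge n Δ with h1 | h1
  · have h0 : n / Δ = 0 := Nat.div_eq_of_lt h1
    rw [dif_pos h1]
    simp [phi, h0]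
  rw [dif_neg (not_lt.2 h1)]
  rcases lt_or_ge n (2 * Δ) with h2 | h2
  · have hq : n / Δ = 1 := Nat.div_eq_of_lt_le (by omega) (by omega)
    rw [dif_pos h2]
    simp only [phi, hq]
    norm_num
    omega
  · rw [dif_neg (not_lt.2 h2), ← ih (n - 2 * Δ) (by omega)]
    have hq2 : 2 ≤ n / Δ := by
      rw [Nat.le_div_iff_mul_le hΔ]; omega
    have hqm : n / Δ * Δ ≤ n := Nat.div_mul_le_self n Δ
    have hqs : (n - 2 * Δ) / Δ = n / Δ - 2 := by
      rw [mul_comm 2 Δ]; exact Nat.sub_mul_div n Δ 2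
    simp only [phi, hqs]
    rcases Nat.even_or_odd (n / Δ) with he | ho
    · rw [if_pos he, if_pos ((Nat.even_sub hq2).2 (by simp [he]))]
      have h12 : 1 ≤ n / Δ / 2 := by omega
      have : (n / Δ - 2) / 2 = n / Δ / 2 - 1 := by omega
      rw [this]
      set m := n / Δ / 2 with hm
      have : m * Δ = (m - 1) * Δ + Δ := by
        rw [Nat.sub_one_mul]; have := Nat.le_mul_of_pos_left Δ h12; omega
      omega
    · have ho' : ¬ Even (n / Δ) := Nat.not_even_iff_odd.2 ho
      rw [if_neg ho', if_neg (by rw [Nat.even_sub hq2]; simp [Nat.not_even_iff_odd.2 ho])]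
      have hq3 : 3 ≤ n / Δ := by
        rcases ho with ⟨k, hk⟩; omega
      have e1 : (n / Δ - 1) / 2 = (n / Δ - 2 - 1) / 2 + 1 := by omega
      set k := (n / Δ - 2 - 1) / 2 with hk
      have hkq : k + 2 ≤ n / Δ := by omega
      have h2 : (k + 2) * Δ ≤ n := le_trans (Nat.mul_le_mul_right Δ hkq) hqm
      rw [e1, add_one_mul]
      have hkk : k * Δ + 2 * Δ ≤ n := by
        have : (k+2) * Δ = k * Δ + 2 * Δ := by ring
        omega
      omega

lemma exists_opt (Δ : ℕ) : ∀ n, ∃ b : ℕ → Bool, costF Δ n b = 0 ∧ cnt n b = Cfun Δ n := by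
  intro n
  induction n using Nat.strong_induction_on with
  | _ n ih =>
  rcases Nat.eq_zero_or_pos Δ with hΔ | hΔ
  · subst hΔ
    refine ⟨fun _ => false, ?_, ?_⟩
    · simp [costF]
    · rw [Cfun]; simp [cnt]
  have hne : Δ ≠ 0 := hΔ.ne'
  rcases lt_or_ge n Δ with h1 | h1
  · refine ⟨fun _ => false, ?_, ?_⟩
    · simp [costF]
    · rw [Cfun, dif_neg hne, dif_pos h1]; simp [cnt]
  rcases lt_or_ge n (2 * Δ) with h2 | h2
  · refine ⟨fun j => decide (j < n - Δ), ?_, ?_⟩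
    · rw [costF]
      have hA : ∑ j ∈ range (n - Δ),
          ((decide (j < n - Δ)) && (decide (j + Δ < n - Δ))).toNat = 0 :=
        Finset.sum_eq_zero fun j hj => by
          have : ¬ (j + Δ < n - Δ) := by omega
          simp [this]
      have hL : ∑ j ∈ Finset.Ico (n - Δ) n, (decide (j < n - Δ)).toNat = 0 :=
        Finset.sum_eq_zero fun j hj => by
          simp only [Finset.mem_Ico] at hj
          have : ¬ (j < n - Δ) := by omega
          simp [this]
      rw [hA, hL]
    · rw [Cfun, dif_neg hne, dif_neg (not_lt.2 h1), dif_pos h2, cnt,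
        sum_range_split' _ (show n - Δ ≤ n from by omega)]
      have e1 : ∑ j ∈ range (n - Δ), (decide (j < n - Δ)).toNat = n - Δ := by
        have h : ∀ j ∈ range (n - Δ), (decide (j < n - Δ)).toNat = 1 := fun j hj => by
          simp [Finset.mem_range.1 hj]
        rw [Finset.sum_congr rfl h, Finset.sum_const, card_range, smul_eq_mul, mul_one]
      have e2 : ∑ j ∈ range (n - (n - Δ)), (decide (n - Δ + j < n - Δ)).toNat = 0 :=
        Finset.sum_eq_zero fun j hj => by
          have : ¬ (n - Δ + j < n - Δ) := by omega
          simp [this]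
      omega
  · obtain ⟨b', hc', hn'⟩ := ih (n - 2 * Δ) (by omega)
    have hA' : ∀ i ∈ range (n - 2 * Δ - Δ), (b' i && b' (i + Δ)).toNat = 0 := by
      rw [costF] at hc'
      have := (Nat.add_eq_zero.1 hc').1
      exact fun i hi => (Finset.sum_eq_zero_iff.1 this) i hi
    have hL' : ∀ i, n - 2 * Δ - Δ ≤ i → i < n - 2 * Δ → (b' i).toNat = 0 := by
      rw [costF] at hc'
      have := (Nat.add_eq_zero.1 hc').2
      exact fun i hi1 hi2 => (Finset.sum_eq_zero_iff.1 this) i (Finset.mem_Ico.2 ⟨hi1, hi2⟩)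
    refine ⟨fun j => if j < Δ then true else if j < 2 * Δ then false else b' (j - 2 * Δ),
      ?_, ?_⟩
    · rw [costF]
      have hA : ∑ j ∈ range (n - Δ), ((if j < Δ then true else if j < 2 * Δ then false
            else b' (j - 2 * Δ)) &&
          (if j + Δ < Δ then true else if j + Δ < 2 * Δ then false
            else b' (j + Δ - 2 * Δ))).toNat = 0 :=
        Finset.sum_eq_zero fun j hj => by
          simp only [Finset.mem_range] at hj
          by_cases hc1 : j < Δ
          · rw [if_pos hc1, if_neg (by omega : ¬ j + Δ < Δ), if_pos (by omega : j + Δ < 2 * Δ)]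
            simp
          · by_cases hc2 : j < 2 * Δ
            · rw [if_neg hc1, if_pos hc2]
              simp
            · rw [if_neg hc1, if_neg hc2, if_neg (by omega : ¬ j + Δ < Δ),
                if_neg (by omega : ¬ j + Δ < 2 * Δ),
                show j + Δ - 2 * Δ = (j - 2 * Δ) + Δ from by omega]
              exact hA' _ (Finset.mem_range.2 (by omega))
      have hL : ∑ j ∈ Finset.Ico (n - Δ) n, (if j < Δ then true else if j < 2 * Δ then false
            else b' (j - 2 * Δ)).toNat = 0 :=
        Finset.sum_eq_zero fun j hj => by
          simp only [Finset.mem_Ico] at hj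
          by_cases hc1 : j < Δ
          · omega
          · by_cases hc2 : j < 2 * Δ
            · rw [if_neg hc1, if_pos hc2]; rfl
            · rw [if_neg hc1, if_neg hc2]
              exact hL' _ (by omega) (by omega)
      rw [hA, hL]
    · rw [Cfun, dif_neg hne, dif_neg (not_lt.2 h1), dif_neg (not_lt.2 h2), cnt,
        sum_range_split' _ (show 2 * Δ ≤ n from h2),
        sum_range_split' _ (show Δ ≤ 2 * Δ from by omega)]
      have e1 : ∑ j ∈ range Δ, (if j < Δ then true else if j < 2 * Δ then false
          else b' (j - 2 * Δ)).toNat = Δ := by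
        have h : ∀ j ∈ range Δ, (if j < Δ then true else if j < 2 * Δ then false
            else b' (j - 2 * Δ)).toNat = 1 := fun j hj => by
          rw [if_pos (Finset.mem_range.1 hj)]; rfl
        rw [Finset.sum_congr rfl h, Finset.sum_const, card_range, smul_eq_mul, mul_one]
      have e2 : ∑ j ∈ range (2 * Δ - Δ), (if Δ + j < Δ then true else if Δ + j < 2 * Δ then false
          else b' (Δ + j - 2 * Δ)).toNat = 0 :=
        Finset.sum_eq_zero fun j hj => by
          simp only [Finset.mem_range] at hj
          rw [if_neg (by omega : ¬ Δ + j < Δ), if_pos (by omega : Δ + j < 2 * Δ)]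
          rfl
      have e3 : ∑ j ∈ range (n - 2 * Δ), (if 2 * Δ + j < Δ then true
          else if 2 * Δ + j < 2 * Δ then false
          else b' (2 * Δ + j - 2 * Δ)).toNat = Cfun Δ (n - 2 * Δ) := by
        rw [← hn', cnt]
        refine Finset.sum_congr rfl fun j hj => ?_
        rw [if_neg (by omega : ¬ 2 * Δ + j < Δ), if_neg (by omega : ¬ 2 * Δ + j < 2 * Δ),
          show 2 * Δ + j - 2 * Δ = j from by omega]
      rw [e1, e2, e3]
      omega

def bOf {nM : ℕ} (a : Fin nM → ZMod 2) : ℕ → Bool :=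
  fun j => if h : j < nM then decide (a ⟨j, h⟩ = 0) else false

lemma zmod_sub_one : ∀ v : ZMod 2, (1 - v = 1) ↔ v = 0 := by decide

lemma overlap_eq (Δ nM : ℕ) (a : Fin nM → ZMod 2) :
    overlap Δ a = costF Δ nM (bOf a) := by
  classical
  set g : ℕ → ℕ := fun j =>
    if (j < nM → bOf a j = true) ∧ (Δ ≤ j ∧ bOf a (j - Δ) = true) then 1 else 0 with hg
  have hcard : overlap Δ a = ∑ j ∈ range (nM + Δ), g j := by
    rw [overlap, Finset.card_filter, ← Fin.sum_univ_eq_sum_range g (nM + Δ)]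
    refine Finset.sum_congr rfl fun i _ => ?_
    have hiff1 : gamma1 Δ a i = 1 ↔ ((i : ℕ) < nM → bOf a (i : ℕ) = true) := by
      rw [gamma1]
      by_cases h : (i : ℕ) < nM
      · rw [dif_pos h, zmod_sub_one]
        simp only [bOf, dif_pos h, decide_eq_true_eq]
        exact ⟨fun hv _ => hv, fun hv => hv h⟩
      · rw [dif_neg h]
        simp [h]
    have hiff2 : gamma2 Δ a i = 1 ↔ (Δ ≤ (i : ℕ) ∧ bOf a ((i : ℕ) - Δ) = true) := by
      unfold gamma2
      by_cases h : Δ ≤ (i : ℕ)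
      · rw [dif_pos h, zmod_sub_one]
        have hlt : (i : ℕ) - Δ < nM := by have := i.isLt; omega
        simp only [bOf, dif_pos hlt, decide_eq_true_eq]
        tauto
      · rw [dif_neg h]
        simp only [h, false_and, iff_false]
        decide
    rw [hg]
    simp only [hiff1, hiff2]
  rw [hcard, sum_range_split' g (show Δ ≤ nM + Δ from by omega),
    show nM + Δ - Δ = nM from by omega]
  have hz : ∑ j ∈ range Δ, g j = 0 :=
    Finset.sum_eq_zero fun j hj => by
      simp only [Finset.mem_range] at hj
      rw [hg]
      simp only [ite_eq_right_iff, and_imp]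
      intro _ h2
      omega
  rw [hz, Nat.zero_add,
    sum_range_split' (fun j => g (Δ + j)) (show nM - Δ ≤ nM from by omega)]
  rw [costF, Finset.sum_Ico_eq_sum_range, show nM - (nM - Δ) = nM - (nM - Δ) from rfl]
  congr 1
  · refine Finset.sum_congr rfl fun j hj => ?_
    simp only [Finset.mem_range] at hj
    rw [hg]
    simp only [show Δ + j - Δ = j from by omega, show Δ ≤ Δ + j from by omega, true_and]
    have hjn : Δ + j < nM := by omega
    simp only [hjn, forall_true_left, true_implies]
    cases h1 : bOf a j <;> cases h2 : bOf a (j + Δ) <;>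
      simp [show Δ + j = j + Δ from by omega, h1, h2]
  · refine Finset.sum_congr rfl fun j hj => ?_
    simp only [Finset.mem_range] at hj
    rw [hg]
    have h1 : ¬ (Δ + (nM - Δ + j) < nM) := by omega
    have h2 : Δ ≤ Δ + (nM - Δ + j) := by omega
    simp only [h1, false_implies, true_and, h2,
      show Δ + (nM - Δ + j) - Δ = nM - Δ + j from by omega]
    cases h3 : bOf a (nM - Δ + j) <;> simp [h3]

lemma wt_add_cnt (nM : ℕ) (a : Fin nM → ZMod 2) : wt a + cnt nM (bOf a) = nM := by
  classical
  have hwt : wt a = ∑ j ∈ range nM,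
      (if h : j < nM then (if a ⟨j, h⟩ = 1 then 1 else 0) else 0) := by
    rw [wt, Finset.card_filter,
      ← Fin.sum_univ_eq_sum_range (fun j => if h : j < nM then (if a ⟨j, h⟩ = 1 then 1 else 0) else 0) nM]
    exact Finset.sum_congr rfl fun i _ => by rw [dif_pos i.isLt]
  have hcnt : cnt nM (bOf a) = ∑ j ∈ range nM,
      (if h : j < nM then ((decide (a ⟨j, h⟩ = 0)).toNat) else 0) := by
    rw [cnt]
    refine Finset.sum_congr rfl fun j hj => ?_
    simp only [Finset.mem_range] at hj
    rw [bOf]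
    simp only [dif_pos hj]
  rw [hwt, hcnt, ← Finset.sum_add_distrib]
  have : ∀ j ∈ range nM, ((if h : j < nM then (if a ⟨j, h⟩ = 1 then 1 else 0) else 0)
      + if h : j < nM then ((decide (a ⟨j, h⟩ = 0)).toNat) else 0) = 1 := by
    intro j hj
    simp only [Finset.mem_range] at hj
    simp only [dif_pos hj]
    have : ∀ v : ZMod 2, ((if v = 1 then 1 else 0) + (decide (v = 0)).toNat) = 1 := by
      decide
    exact this _
  rw [Finset.sum_congr rfl this, Finset.sum_const, card_range, smul_eq_mul, mul_one]

lemma cnt_congr {n : ℕ} {b b' : ℕ → Bool} (h : ∀ j < n, b j = b' j) :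
    cnt n b = cnt n b' :=
  Finset.sum_congr rfl fun j hj => by rw [h j (Finset.mem_range.1 hj)]

lemma costF_congr {Δ n : ℕ} {b b' : ℕ → Bool} (h : ∀ j < n, b j = b' j) :
    costF Δ n b = costF Δ n b' := by
  rw [costF, costF]
  congr 1
  · refine Finset.sum_congr rfl fun j hj => ?_
    simp only [Finset.mem_range] at hj
    rw [h j (by omega), h (j + Δ) (by omega)]
  · refine Finset.sum_congr rfl fun j hj => ?_
    simp only [Finset.mem_Ico] at hj
    rw [h j (by omega)]

lemma exists_wt {nM : ℕ} (x : ℕ) (hx : x ≤ nM) : ∃ a : Fin nM → ZMod 2, wt a = x := by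
  classical
  refine ⟨fun i => if (i : ℕ) < x then 1 else 0, ?_⟩
  have hpred : (Finset.univ.filter fun i : Fin nM => (if (i : ℕ) < x then (1 : ZMod 2) else 0) = 1)
      = Finset.univ.filter (fun i : Fin nM => (i : ℕ) < x) := by
    refine Finset.filter_congr fun i _ => ?_
    by_cases h : (i : ℕ) < x
    · simp [h]
    · simp only [h, if_neg h, iff_false]
      decide
  rw [wt, hpred, Finset.card_filter,
    Fin.sum_univ_eq_sum_range (fun j => if j < x then (1:ℕ) else 0) nM,
    sum_range_split' _ hx]
  have e1 : ∑ j ∈ range x, (if j < x then (1:ℕ) else 0) = x := by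
    have h : ∀ j ∈ range x, (if j < x then (1:ℕ) else 0) = 1 := fun j hj => by
      rw [if_pos (Finset.mem_range.1 hj)]
    rw [Finset.sum_congr rfl h, Finset.sum_const, card_range, smul_eq_mul, mul_one]
  have e2 : ∑ j ∈ range (nM - x), (if x + j < x then (1:ℕ) else 0) = 0 :=
    Finset.sum_eq_zero fun j hj => by rw [if_neg (by omega)]
  omega

/-- The maximum over `0 ≤ x ≤ n_M` of `2n_M + Δ − x − ρ(x)` equals
`n_M + φ(n_M, Δ)`. -/
theorem max_rate_eq_phi (nM Δ : ℕ) :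
    IsGreatest {v : ℤ | ∃ x : ℕ, x ≤ nM ∧
        v = 2 * (nM : ℤ) + (Δ : ℤ) - (x : ℤ) - (rho Δ nM x : ℤ)}
      ((nM : ℤ) + (phi nM Δ : ℤ)) := by
  classical
  constructor
  · -- membership
    obtain ⟨b, hc, hn⟩ := exists_opt Δ nM
    set a : Fin nM → ZMod 2 := fun i => if b (i : ℕ) then 0 else 1 with ha
    have hbo : ∀ j < nM, bOf a j = b j := by
      intro j hj
      rw [bOf, dif_pos hj, ha]
      cases h : b j <;> simp [h]
    have hcost : costF Δ nM (bOf a) = 0 := (costF_congr hbo).trans hc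
    have hcnt : cnt nM (bOf a) = Cfun Δ nM := (cnt_congr hbo).trans hn
    have hov : overlap Δ a = 0 := (overlap_eq Δ nM a).trans hcost
    have hwt := wt_add_cnt nM a
    refine ⟨wt a, by omega, ?_⟩
    have hrho : rho Δ nM (wt a) = 0 := by
      have h0 : (0 : ℕ) ∈ overlap Δ '' {a' : Fin nM → ZMod 2 | wt a' = wt a} :=
        ⟨a, rfl, hov⟩
      have hle : rho Δ nM (wt a) ≤ 0 := Nat.sInf_le h0
      omega
    rw [hrho]
    have hphi := phi_eq Δ nM
    rw [hphi]
    push_cast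
    omega
  · rintro v ⟨x, hx, rfl⟩
    obtain ⟨a₀, ha₀⟩ := exists_wt x hx
    have hne : (overlap Δ '' {a : Fin nM → ZMod 2 | wt a = x}).Nonempty :=
      ⟨_, a₀, ha₀, rfl⟩
    have hmem : rho Δ nM x ∈ overlap Δ '' {a : Fin nM → ZMod 2 | wt a = x} :=
      Nat.sInf_mem hne
    obtain ⟨a, haw, hov⟩ := hmem
    have hax : wt a = x := haw
    have hlb := lower_bound Δ nM (bOf a)
    rw [← overlap_eq Δ nM a] at hlb
    have hwt := wt_add_cnt nM a
    have hphi := phi_eq Δ nM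
    have hro : rho Δ nM x = overlap Δ a := hov.symm
    rw [hro, hphi]
    push_cast
    omega
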